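/- Let f(x) = x² - x - 3 and ζ(x) = (x + 3)(x - 1)/(3(2x - 1)). For every real x > -13/4, if y₁ and y₂ are the two real solutions of f(y) = x, then ζ(y₁) + ζ(y₂) = 1. -/

import Mathlib

/-- For `f y = y^2 - y - 3` and `ζ y = (y + 3)(y - 1) / (3(2y - 1))`: if `x > -13/4`
and `y₁, y₂` are the two real solutions of `f y = x`, then `ζ y₁ + ζ y₂ = 1`. -/
theorem zeta_sum_eq_one (x y₁ y₂ : ℝ)
    (hx : -13/4 < x)
    (h1 : y₁ ^ 2 - y₁ - 3 = x) (h2 : y₂ ^ 2 - y₂ - 3 = x) (hne : y₁ ≠ y₂) :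
    (y₁ + 3) * (y₁ - 1) / (3 * (2 * y₁ - 1)) + (y₂ + 3) * (y₂ - 1) / (3 * (2 * y₂ - 1)) = 1 := by
  have hsum : y₁ + y₂ = 1 := by
    have hd : y₁ - y₂ ≠ 0 := sub_ne_zero.mpr hne
    have : (y₁ - y₂) * (y₁ + y₂ - 1) = 0 := by nlinarith [h1, h2]
    rcases mul_eq_zero.mp this with h | h
    · exact absurd h hd
    · linarith
  have h21 : 2 * y₁ - 1 ≠ 0 := by
    intro h
    have : y₁ = 1/2 := by linarith
    nlinarith [h1]
  have h22 : 2 * y₂ - 1 ≠ 0 := by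
    intro h
    have : y₂ = 1/2 := by linarith
    nlinarith [h2]
  have hy2 : y₂ = 1 - y₁ := by linarith
  subst hy2
  rw [div_add_div _ _ (mul_ne_zero three_ne_zero h21) (mul_ne_zero three_ne_zero h22),
    div_eq_one_iff_eq (mul_ne_zero (mul_ne_zero three_ne_zero h21) (mul_ne_zero three_ne_zero h22))]
  ring
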